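/- Let n ≥ 1 and let p(z) = ∑_{k=0}^{n} a_k z^k be a polynomial with complex coefficients such that there exist real numbers β and α with 0 ≤ α ≤ π/2 and, for every k = 0, 1, …, n with a_k ≠ 0, |arg(a_k · exp(−βi))| ≤ α, and such that |a_n| ≥ |a_{n−1}| ≥ ⋯ ≥ |a_0| and a_n ≠ 0. Then every complex number z with p(z) = 0 satisfies |z| ≤ cos α + sin α + (2 sin α / |a_n|) · ∑_{k=0}^{n−1} |a_k|. -/

import Mathlib

open Finset

lemma govil_key (α : ℝ) (hα0 : 0 ≤ α) (hα : α ≤ Real.pi / 2) (x y : ℂ)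
    (hx : |x.arg| ≤ α) (hy : |y.arg| ≤ α) (hle : ‖y‖ ≤ ‖x‖) :
    ‖x - y‖ ≤ (‖x‖ - ‖y‖) * Real.cos α
      + (‖x‖ + ‖y‖) * Real.sin α := by
  have hπ := Real.pi_pos
  have hcos : 0 ≤ Real.cos α :=
    Real.cos_nonneg_of_mem_Icc ⟨by linarith, hα⟩
  have hsin : 0 ≤ Real.sin α :=
    Real.sin_nonneg_of_nonneg_of_le_pi hα0 (by linarith)
  have hr : 0 ≤ ‖y‖ := norm_nonneg y
  have hRHS : 0 ≤ (‖x‖ - ‖y‖) * Real.cos α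
      + (‖x‖ + ‖y‖) * Real.sin α := by
    have := mul_nonneg (sub_nonneg.mpr hle) hcos
    have := mul_nonneg (by linarith : (0:ℝ) ≤ ‖x‖ + ‖y‖) hsin
    linarith
  rw [Complex.norm_def, show ((‖x‖ - ‖y‖) * Real.cos α
      + (‖x‖ + ‖y‖) * Real.sin α) = Real.sqrt (((‖x‖ - ‖y‖) * Real.cos α
      + (‖x‖ + ‖y‖) * Real.sin α)^2) from (Real.sqrt_sq hRHS).symm]
  apply Real.sqrt_le_sqrt
  have hxre := Complex.norm_mul_cos_arg x
  have hxim := Complex.norm_mul_sin_arg x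
  have hyre := Complex.norm_mul_cos_arg y
  have hyim := Complex.norm_mul_sin_arg y
  have hcc : Real.cos (x.arg - y.arg) = Real.cos x.arg * Real.cos y.arg
      + Real.sin x.arg * Real.sin y.arg := Real.cos_sub _ _
  have hge : Real.cos (2 * α) ≤ Real.cos (x.arg - y.arg) := by
    rw [← Real.cos_abs (x.arg - y.arg)]
    apply Real.cos_le_cos_of_nonneg_of_le_pi (abs_nonneg _) (by linarith)
    calc |x.arg - y.arg| ≤ |x.arg| + |y.arg| := abs_sub _ _
    _ ≤ 2 * α := by linarith
  rw [Real.cos_two_mul] at hge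
  have h1 := Real.sin_sq_add_cos_sq x.arg
  have h2 := Real.sin_sq_add_cos_sq y.arg
  have h3 := Real.sin_sq_add_cos_sq α
  rw [Complex.normSq_apply, Complex.sub_re, Complex.sub_im]
  have hL : (x.re - y.re) * (x.re - y.re) + (x.im - y.im) * (x.im - y.im)
      = (‖x‖)^2 + (‖y‖)^2
        - 2 * (‖x‖) * (‖y‖) * Real.cos (x.arg - y.arg) := by
    rw [← hxre, ← hxim, ← hyre, ← hyim, hcc]
    linear_combination (‖x‖)^2 * h1 + (‖y‖)^2 * h2
  rw [hL]
  nlinarith [mul_le_mul_of_nonneg_left hge (mul_nonneg (norm_nonneg x) hr),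
    mul_nonneg (mul_nonneg (mul_nonneg (sub_nonneg.mpr hle)
      (by linarith : (0:ℝ) ≤ ‖x‖ + ‖y‖)) hsin) hcos,
    mul_nonneg (norm_nonneg x) hr]

/-- Govil–Rahman theorem: zeros of a complex polynomial whose coefficients have arguments
in a sector of half-angle `α ≤ π/2` around direction `β`, with nonincreasing moduli
(from leading to constant coefficient), lie in the stated disk. -/
theorem govil_rahman (n : ℕ) (hn : 1 ≤ n) (a : ℕ → ℂ) (β α : ℝ)
    (hα0 : 0 ≤ α) (hα : α ≤ Real.pi / 2)
    (harg : ∀ k ≤ n, a k ≠ 0 → |(a k * Complex.exp (-(β : ℂ) * Complex.I)).arg| ≤ α)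
    (hmono : ∀ k < n, ‖a k‖ ≤ ‖a (k + 1)‖)
    (han : a n ≠ 0)
    (z : ℂ) (hz : ∑ k ∈ Finset.range (n + 1), a k * z ^ k = 0) :
    ‖z‖ ≤ Real.cos α + Real.sin α +
      2 * Real.sin α / ‖a n‖ * ∑ k ∈ Finset.range n, ‖a k‖ := by

  have hπ := Real.pi_pos
  have hcos : 0 ≤ Real.cos α := Real.cos_nonneg_of_mem_Icc ⟨by linarith, hα⟩
  have hsin : 0 ≤ Real.sin α := Real.sin_nonneg_of_nonneg_of_le_pi hα0 (by linarith)
  have hcs1 : 1 ≤ Real.cos α + Real.sin α := by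
    nlinarith [Real.sin_sq_add_cos_sq α, Real.cos_le_one α, Real.sin_le_one α]
  have hA : 0 < ‖a n‖ := by simpa using han
  have hSig : 0 ≤ ∑ k ∈ Finset.range n, ‖a k‖ :=
    Finset.sum_nonneg fun k _ => norm_nonneg _
  set R := Real.cos α + Real.sin α +
      2 * Real.sin α / ‖a n‖ * ∑ k ∈ Finset.range n, ‖a k‖ with hR
  by_contra hlt
  push_neg at hlt
  have hR1 : 1 ≤ R := by
    have : 0 ≤ 2 * Real.sin α / ‖a n‖ * ∑ k ∈ Finset.range n, ‖a k‖ :=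
      mul_nonneg (div_nonneg (by linarith) hA.le) hSig
    simp only [hR]; linarith
  have hz1 : 1 ≤ ‖z‖ := by linarith
  -- difference coefficients
  set c : ℕ → ℂ := fun k => match k with
    | 0 => a 0
    | (j+1) => a (j+1) - a j with hc
  -- algebraic identity
  have hid : ∀ m : ℕ, ∑ k ∈ Finset.range (m+1), c k * z ^ k
      = (1 - z) * ∑ k ∈ Finset.range (m+1), a k * z ^ k + a m * z ^ (m+1) := by
    intro m
    induction m with
    | zero => simp [hc]; ring
    | succ m ih =>
      rw [Finset.sum_range_succ, ih]
      simp only [Finset.sum_range_succ]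
      show _ + (a (m+1) - a m) * z ^ (m+1) = _
      ring
  -- arg bounds on rotated coefficients
  set b : ℕ → ℂ := fun k => a k * Complex.exp (-(β : ℂ) * Complex.I) with hb
  have habsb : ∀ k, ‖b k‖ = ‖a k‖ := by
    intro k
    simp [hb, Complex.norm_exp]
  have hargb : ∀ k ≤ n, |(b k).arg| ≤ α := by
    intro k hk
    by_cases h : a k = 0
    · simp [hb, h, hα0]
    · exact harg k hk h
  -- bound on the sum of |c k|
  have hsum : ∀ m, m ≤ n → ∑ k ∈ Finset.range (m+1), ‖c k‖
      ≤ ‖a m‖ * Real.cos α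
        + (‖a m‖ + 2 * ∑ k ∈ Finset.range m, ‖a k‖) * Real.sin α := by
    intro m hm
    induction m with
    | zero =>
      have := govil_key α hα0 hα (b 0) 0 (hargb 0 (Nat.zero_le n))
        (by simp [hα0]) (by simp)
      simp only [norm_zero, sub_zero, add_zero] at this
      rw [habsb] at this
      have hc0 : ‖c 0‖ = ‖a 0‖ := by simp [hc]
      simp [hc0]
      linarith [this]
    | succ m ih =>
      have hm' : m ≤ n := by omega
      have hmono' : ‖a m‖ ≤ ‖a (m+1)‖ := hmono m (by omega)
      have hkey := govil_key α hα0 hα (b (m+1)) (b m) (hargb (m+1) hm)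
        (hargb m hm') (by rw [habsb, habsb]; exact hmono')
      have hbd : b (m+1) - b m = (a (m+1) - a m) * Complex.exp (-(β : ℂ) * Complex.I) := by
        simp [hb]; ring
      have habsd : ‖b (m+1) - b m‖ = ‖c (m+1)‖ := by
        rw [hbd]; simp [hc, Complex.norm_exp]
      rw [habsd, habsb, habsb] at hkey
      rw [Finset.sum_range_succ, Finset.sum_range_succ (f := fun k => ‖a k‖)]
      have := ih hm'
      linarith
  -- main estimate
  have hmain : ‖a n‖ * ‖z‖ ^ (n+1)
      ≤ (∑ k ∈ Finset.range (n+1), ‖c k‖) * ‖z‖ ^ n := by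
    have h0 : a n * z ^ (n+1) = ∑ k ∈ Finset.range (n+1), c k * z ^ k := by
      rw [hid n, hz]; ring
    calc ‖a n‖ * ‖z‖ ^ (n+1)
        = ‖a n * z ^ (n+1)‖ := by rw [norm_mul, norm_pow]
      _ = ‖∑ k ∈ Finset.range (n+1), c k * z ^ k‖ := by rw [h0]
      _ ≤ ∑ k ∈ Finset.range (n+1), ‖c k * z ^ k‖ := norm_sum_le _ _
      _ ≤ ∑ k ∈ Finset.range (n+1), ‖c k‖ * ‖z‖ ^ n := by
          apply Finset.sum_le_sum
          intro k hk
          rw [norm_mul, norm_pow]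
          exact mul_le_mul_of_nonneg_left
            (pow_le_pow_right₀ hz1 (Nat.lt_succ_iff.mp (Finset.mem_range.mp hk)))
            (norm_nonneg _)
      _ = (∑ k ∈ Finset.range (n+1), ‖c k‖) * ‖z‖ ^ n := by
          rw [← Finset.sum_mul]
  have hAR : ‖a n‖ * R = ‖a n‖ * Real.cos α
      + (‖a n‖ + 2 * ∑ k ∈ Finset.range n, ‖a k‖) * Real.sin α := by
    rw [hR]
    field_simp [hR]
    ring
  have hP : 0 < ‖z‖ ^ n := pow_pos (by linarith) n
  have hfin : ‖a n‖ * ‖z‖ ^ (n+1)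
      ≤ ‖a n‖ * R * ‖z‖ ^ n := by
    rw [hAR]
    calc ‖a n‖ * ‖z‖ ^ (n+1)
        ≤ (∑ k ∈ Finset.range (n+1), ‖c k‖) * ‖z‖ ^ n := hmain
      _ ≤ _ := mul_le_mul_of_nonneg_right (hsum n le_rfl) hP.le
  rw [pow_succ] at hfin
  have : ‖z‖ ≤ R := by
    have h := hfin
    nlinarith [mul_pos hA hP]
  linarith
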